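/- Let t_0,...,t_b and s_0,...,s_b be nonnegative reals with ∑_{j≤b} t_j < 0.9·∑_{j≤b} s_j. Then there exists b' ≤ b such that ∑_{b'≤j≤b} t_j·100^{-j} < 0.9·∑_{b'≤j≤b} s_j·100^{-j}. -/
import Mathlib


/-- If `t_0,…,t_b, s_0,…,s_b ≥ 0` and `∑_{j≤b} t_j < 0.9 ∑_{j≤b} s_j`, then there is
`b' ≤ b` with `∑_{b'≤j≤b} t_j 100^{-j} < 0.9 ∑_{b'≤j≤b} s_j 100^{-j}`. -/
theorem stmt2 (b : ℕ) (t s : ℕ → ℝ) (ht : ∀ j, 0 ≤ t j) (hs : ∀ j, 0 ≤ s j)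
    (h : ∑ j ∈ Finset.range (b + 1), t j < 0.9 * ∑ j ∈ Finset.range (b + 1), s j) :
    ∃ b' ≤ b, ∑ j ∈ Finset.Icc b' b, t j * ((100 : ℝ) ^ j)⁻¹
      < 0.9 * ∑ j ∈ Finset.Icc b' b, s j * ((100 : ℝ) ^ j)⁻¹ := by
  by_contra hcon
  push_neg at hcon
  set f : ℕ → ℝ := fun j => t j - 0.9 * s j with hf
  have hfsum : ∀ b', ∑ j ∈ Finset.Icc b' b, f j * ((100:ℝ)^j)⁻¹
      = ∑ j ∈ Finset.Icc b' b, t j * ((100:ℝ)^j)⁻¹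
        - ∑ j ∈ Finset.Icc b' b, 0.9 * (s j * ((100:ℝ)^j)⁻¹) := by
    intro b'
    rw [← Finset.sum_sub_distrib]
    exact Finset.sum_congr rfl fun j _ => by simp [hf]; ring
  have hu : ∀ b' ≤ b, 0 ≤ ∑ j ∈ Finset.Icc b' b, f j * ((100:ℝ)^j)⁻¹ := by
    intro b' hb'
    have h1 := hcon b' hb'
    rw [Finset.mul_sum] at h1
    rw [hfsum]
    linarith
  have key : ∀ k, k ≤ b → (100:ℝ)^(b-k) * ∑ j ∈ Finset.Icc (b-k) b, f j * ((100:ℝ)^j)⁻¹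
      ≤ ∑ j ∈ Finset.Icc (b-k) b, f j := by
    intro k
    induction k with
    | zero =>
      intro _
      simp only [Nat.sub_zero, Finset.Icc_self, Finset.sum_singleton]
      rw [mul_comm (f b) ((100:ℝ)^b)⁻¹, ← mul_assoc, mul_inv_cancel₀ (by positivity : ((100:ℝ)^b) ≠ 0), one_mul]
    | succ k ih =>
      intro hk
      have ih' := ih (Nat.le_of_succ_le hk)
      set m := b - (k+1) with hm
      have hstep : b - k = m + 1 := by omega
      rw [hstep] at ih'
      have hU' := hu (m+1) (by omega)
      have hsplit : Finset.Icc m b = Finset.cons m (Finset.Icc (m+1) b)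
          (by simp) := by
        ext x
        simp only [Finset.mem_Icc, Finset.mem_cons]
        omega
      rw [hsplit, Finset.sum_cons, Finset.sum_cons]
      have hpos : (0:ℝ) < 100 := by norm_num
      have hmul : (100:ℝ)^m * (f m * ((100:ℝ)^m)⁻¹) = f m := by
        rw [mul_comm (f m), ← mul_assoc, mul_inv_cancel₀ (by positivity), one_mul]
      have hmono : (100:ℝ)^m * ∑ j ∈ Finset.Icc (m+1) b, f j * ((100:ℝ)^j)⁻¹
          ≤ (100:ℝ)^(m+1) * ∑ j ∈ Finset.Icc (m+1) b, f j * ((100:ℝ)^j)⁻¹ := by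
        apply mul_le_mul_of_nonneg_right _ hU'
        exact pow_le_pow_right₀ (by norm_num) (Nat.le_succ m)
      calc (100:ℝ)^m * (f m * ((100:ℝ)^m)⁻¹ + ∑ j ∈ Finset.Icc (m+1) b, f j * ((100:ℝ)^j)⁻¹)
          = f m + (100:ℝ)^m * ∑ j ∈ Finset.Icc (m+1) b, f j * ((100:ℝ)^j)⁻¹ := by
            rw [mul_add, hmul]
        _ ≤ f m + (100:ℝ)^(m+1) * ∑ j ∈ Finset.Icc (m+1) b, f j * ((100:ℝ)^j)⁻¹ := by
            linarith
        _ ≤ f m + ∑ j ∈ Finset.Icc (m+1) b, f j := by linarith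
  have hkey := key b le_rfl
  have hu0 := hu 0 (Nat.zero_le b)
  rw [Nat.sub_self] at hkey
  have hIcc : Finset.Icc 0 b = Finset.range (b+1) := by
    rw [← Nat.Ico_zero_eq_range, Finset.Ico_add_one_right_eq_Icc]
  rw [hIcc] at hkey
  have hfr : ∑ j ∈ Finset.range (b+1), f j
      = ∑ j ∈ Finset.range (b+1), t j - 0.9 * ∑ j ∈ Finset.range (b+1), s j := by
    rw [Finset.mul_sum, ← Finset.sum_sub_distrib]
  rw [hIcc] at hu0
  simp only [pow_zero, one_mul] at hkey
  nlinarith [hkey, hu0, hfr]
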